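/- (Probabilistic Erdős–Rado theorem) Let $k, r \geq 1$ be integers and let $\mathrm{Sun}(k,r)$ be the smallest natural number such that any $\mathrm{Sun}(k,r)$ distinct sets of cardinality at most $k$ contain $r$ distinct sets forming a sunflower. Let $S$ be a finite set and let $\mathbf{A}$ be a random subset of $S$ of cardinality exactly $k$ (with arbitrary distribution). If $\mathbf{A}_1, \dots, \mathbf{A}_r$ are independent copies of $\mathbf{A}$, then with probability at least $(4\,\mathrm{Sun}(k,r))^{-r}$, the sets $\mathbf{A}_1, \dots, \mathbf{A}_r$ form a sunflower. -/

import Mathlib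

open MeasureTheory ProbabilityTheory ENNReal

/-- A finite family of finite sets is a sunflower: there is a core contained in all
members such that the petals are pairwise disjoint. -/
def IsSunflower {α : Type*} [DecidableEq α] (F : Finset (Finset α)) : Prop :=
  ∃ core : Finset α, (∀ A ∈ F, core ⊆ A) ∧
    ∀ A ∈ F, ∀ B ∈ F, A ≠ B → Disjoint (A \ core) (B \ core)

/-- A tuple of finite sets (possibly with repetitions) forms a sunflower. -/
def IsSunflowerTuple {α : Type*} [DecidableEq α] {r : ℕ} (A : Fin r → Finset α) : Prop :=
  ∃ core : Finset α, (∀ i, core ⊆ A i) ∧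
    ∀ i j, A i ≠ A j → Disjoint (A i \ core) (A j \ core)

/-- `Sun k r`: the least `N` such that any `N` distinct sets of cardinality at most `k`
contain `r` distinct sets forming a sunflower. -/
noncomputable def Sun (k r : ℕ) : ℕ :=
  sInf {N | ∀ F : Finset (Finset ℕ), F.card = N → (∀ A ∈ F, A.card ≤ k) →
    ∃ F' ⊆ F, F'.card = r ∧ IsSunflower F'}

instance : MeasurableSpace (Finset ℕ) := ⊤

section Auxiliary
open Finset


lemma two_pow_le_fact (n : ℕ) : 2 ^ (n - 1) ≤ n.factorial := by
  induction n with
  | zero => simp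
  | succ n ih =>
    rcases Nat.eq_zero_or_pos n with h | h
    · subst h; simp
    · have h1 : n - 1 + 1 = n := Nat.succ_pred_eq_of_pos h
      have e1 : 2 ^ (n + 1 - 1) = 2 * 2 ^ (n - 1) := by
        rw [Nat.add_sub_cancel]
        conv_lhs => rw [← h1]
        rw [pow_succ']
      rw [e1]
      calc 2 * 2 ^ (n - 1) ≤ (n + 1) * n.factorial := Nat.mul_le_mul (by omega) ih
        _ = (n + 1).factorial := rfl

lemma succ_pow_le (r : ℕ) : (r + 1) ^ r ≤ 4 * r ^ r := by
  have key : ∀ i ∈ range (r + 1), r ^ i * 1 ^ (r - i) * (r.choose i) * 2 ^ (r - 1) ≤ r ^ r * 2 ^ i := by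
    intro i hi
    rw [mem_range] at hi
    have hi' : i ≤ r := by omega
    have h1 : r.choose i * 2 ^ (r - i - 1) ≤ r ^ (r - i) := by
      calc r.choose i * 2 ^ (r - i - 1) ≤ r.choose i * (r - i).factorial :=
            Nat.mul_le_mul_left _ (two_pow_le_fact _)
        _ = r.choose (r - i) * (r - i).factorial := by rw [Nat.choose_symm hi']
        _ = r.descFactorial (r - i) := by
            rw [Nat.descFactorial_eq_factorial_mul_choose]; ring
        _ ≤ r ^ (r - i) := Nat.descFactorial_le_pow _ _
    have h2 : r ^ i * (r.choose i * 2 ^ (r - i - 1)) ≤ r ^ i * r ^ (r - i) :=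
      Nat.mul_le_mul_left _ h1
    rw [← pow_add] at h2
    have h3 : i + (r - i) = r := by omega
    rw [h3] at h2
    have h4 : r - 1 ≤ (r - i - 1) + i := by omega
    calc r ^ i * 1 ^ (r - i) * (r.choose i) * 2 ^ (r - 1)
        ≤ r ^ i * 1 ^ (r - i) * (r.choose i) * 2 ^ ((r - i - 1) + i) :=
          Nat.mul_le_mul_left _ (Nat.pow_le_pow_right (by norm_num) h4)
      _ = (r ^ i * (r.choose i * 2 ^ (r - i - 1))) * 2 ^ i := by
          rw [one_pow, pow_add]; ring
      _ ≤ r ^ r * 2 ^ i := Nat.mul_le_mul_right _ h2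
  have hsum := Finset.sum_le_sum key
  have expand : (r + 1) ^ r = ∑ i ∈ range (r + 1), r ^ i * 1 ^ (r - i) * (r.choose i) := by
    simpa using add_pow r 1 r
  rw [← Finset.sum_mul, ← expand] at hsum
  have h5 : ∑ i ∈ range (r + 1), r ^ r * 2 ^ i = r ^ r * (2 ^ (r + 1) - 1) := by
    rw [← Finset.mul_sum, Nat.geomSum_eq (le_refl 2)]; simp
  rw [h5] at hsum
  have h6 : r ^ r * (2 ^ (r + 1) - 1) ≤ (4 * r ^ r) * 2 ^ (r - 1) := by
    have hh : (2:ℕ) ^ (r + 1) - 1 ≤ 4 * 2 ^ (r - 1) := by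
      rcases Nat.eq_zero_or_pos r with h | h
      · subst h; norm_num
      · have h7 : r - 1 + 2 = r + 1 := by omega
        calc (2:ℕ) ^ (r+1) - 1 ≤ 2 ^ (r+1) := Nat.sub_le _ _
          _ = 2 ^ (r-1) * 2 ^ 2 := by rw [← pow_add, h7]
          _ = 4 * 2 ^ (r-1) := by ring
    calc r ^ r * (2 ^ (r + 1) - 1) ≤ r ^ r * (4 * 2 ^ (r-1)) := Nat.mul_le_mul_left _ hh
      _ = (4 * r ^ r) * 2 ^ (r - 1) := by ring
  exact Nat.le_of_mul_le_mul_right (le_trans hsum h6) (Nat.pow_pos (by norm_num))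

lemma pow_self_le (r : ℕ) (hr : 1 ≤ r) : r ^ r ≤ 4 ^ (r - 1) * r.factorial := by
  induction r with
  | zero => omega
  | succ r ih =>
    rcases Nat.eq_zero_or_pos r with h | h
    · subst h; simp
    · have ih' := ih h
      have h1 : r - 1 + 1 = r := by omega
      calc (r+1)^(r+1) = (r+1) * (r+1)^r := by ring
        _ ≤ (r+1) * (4 * r ^ r) := Nat.mul_le_mul_left _ (succ_pow_le r)
        _ ≤ (r+1) * (4 * (4 ^ (r-1) * r.factorial)) := by
            exact Nat.mul_le_mul_left _ (Nat.mul_le_mul_left _ ih')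
        _ = (4 * 4 ^ (r-1)) * ((r+1) * r.factorial) := by ring
        _ = 4 ^ (r + 1 - 1) * (r+1).factorial := by
            rw [← pow_succ', h1, Nat.add_sub_cancel, Nat.factorial_succ]

lemma choose_bound (N r : ℕ) (hr : 1 ≤ r) : (N * r).choose r ≤ (4 * N) ^ r := by
  have h1 : (N * r).choose r * r.factorial ≤ (N * r) ^ r := by
    calc (N * r).choose r * r.factorial = (N*r).descFactorial r := by
          rw [Nat.descFactorial_eq_factorial_mul_choose]; ring
      _ ≤ (N * r) ^ r := Nat.descFactorial_le_pow _ _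
  have h2 : (N * r) ^ r = N ^ r * r ^ r := mul_pow N r r
  have h3 : (N*r).choose r * r.factorial ≤ (N ^ r * 4 ^ (r-1)) * r.factorial := by
    calc (N*r).choose r * r.factorial ≤ N ^ r * r ^ r := by rw [← h2]; exact h1
      _ ≤ N ^ r * (4 ^ (r-1) * r.factorial) := Nat.mul_le_mul_left _ (pow_self_le r hr)
      _ = (N ^ r * 4 ^ (r-1)) * r.factorial := by ring
  have h4 : (N*r).choose r ≤ N ^ r * 4 ^ (r-1) :=
    Nat.le_of_mul_le_mul_right h3 (Nat.factorial_pos r)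
  calc (N*r).choose r ≤ N ^ r * 4 ^ (r-1) := h4
    _ ≤ N ^ r * 4 ^ r := Nat.mul_le_mul_left _ (Nat.pow_le_pow_right (by norm_num) (by omega))
    _ = (4 * N) ^ r := by rw [mul_pow]; ring

lemma sunflower_exists (r : ℕ) (hr : 1 ≤ r) (k : ℕ) :
    ∃ N, ∀ F : Finset (Finset ℕ), N ≤ F.card → (∀ A ∈ F, A.card ≤ k) →
      ∃ F' ⊆ F, F'.card = r ∧ IsSunflower F' := by
  induction k with
  | zero =>
    refine ⟨r + 1, fun F hcard hsize => ?_⟩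
    rcases eq_or_lt_of_le hr with h1 | h1
    · -- r = 1
      obtain ⟨A, hA⟩ : F.Nonempty := Finset.card_pos.mp (by omega)
      refine ⟨{A}, Finset.singleton_subset_iff.mpr hA, by simp [← h1], A, ?_, ?_⟩
      · simp
      · intro B hB C hC hBC
        simp only [Finset.mem_singleton] at hB hC
        exact absurd (hB.trans hC.symm) hBC
    · -- r ≥ 2 : impossible since F ⊆ {∅}
      exfalso
      have hsub : F ⊆ {∅} := fun A hA =>
        Finset.mem_singleton.mpr (Finset.card_eq_zero.mp (Nat.le_zero.mp (hsize A hA)))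
      have := Finset.card_le_card hsub
      simp at this
      omega
  | succ k ih =>
    obtain ⟨N, hN⟩ := ih
    refine ⟨(r - 1) * (k + 1) * N + N + 2, fun F hcard hsize => ?_⟩
    -- maximal pairwise disjoint subfamily
    set 𝒞 : Finset (Finset (Finset ℕ)) :=
      F.powerset.filter (fun D => ∀ A ∈ D, ∀ B ∈ D, A ≠ B → Disjoint A B) with h𝒞
    have h𝒞ne : 𝒞.Nonempty := ⟨∅, by simp [h𝒞]⟩
    obtain ⟨𝒟, h𝒟mem, h𝒟max⟩ := Finset.exists_max_image 𝒞 Finset.card h𝒞ne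
    rw [h𝒞, Finset.mem_filter, Finset.mem_powerset] at h𝒟mem
    obtain ⟨h𝒟F, h𝒟dis⟩ := h𝒟mem
    by_cases hD : r ≤ 𝒟.card
    · obtain ⟨F', hF'sub, hF'card⟩ := Finset.exists_subset_card_eq hD
      refine ⟨F', hF'sub.trans h𝒟F, hF'card, ∅, fun A _ => Finset.empty_subset A, ?_⟩
      intro A hA B hB hAB
      simpa using h𝒟dis A (hF'sub hA) B (hF'sub hB) hAB
    · push_neg at hD
      set Y : Finset ℕ := 𝒟.sup id with hY
      have hYcard : Y.card ≤ (r - 1) * (k + 1) := by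
        calc Y.card = (𝒟.biUnion id).card := by rw [hY, Finset.sup_eq_biUnion]
          _ ≤ ∑ A ∈ 𝒟, (id A).card := Finset.card_biUnion_le
          _ ≤ ∑ _A ∈ 𝒟, (k + 1) := Finset.sum_le_sum (fun A hA => hsize A (h𝒟F hA))
          _ = 𝒟.card * (k + 1) := by rw [Finset.sum_const, smul_eq_mul]
          _ ≤ (r - 1) * (k + 1) := Nat.mul_le_mul_right _ (by omega)
      have hmeet : ∀ A ∈ F, A.Nonempty → (A ∩ Y).Nonempty := by
        intro A hA hAne
        by_contra hcon
        rw [Finset.not_nonempty_iff_eq_empty, ← Finset.disjoint_iff_inter_eq_empty] at hcon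
        have hA𝒟 : A ∉ 𝒟 := by
          intro hmem
          have : A ⊆ Y := Finset.le_sup (f := id) hmem
          obtain ⟨a, ha⟩ := hAne
          exact (Finset.disjoint_left.mp hcon ha) (this ha)
        have hins : insert A 𝒟 ∈ 𝒞 := by
          rw [h𝒞, Finset.mem_filter, Finset.mem_powerset]
          constructor
          · exact Finset.insert_subset hA h𝒟F
          · intro B hB C hC hBC
            rcases Finset.mem_insert.mp hB with rfl | hB' <;>
              rcases Finset.mem_insert.mp hC with rfl | hC'
            · exact absurd rfl hBC
            · exact hcon.mono_right (Finset.le_sup (f := id) hC')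
            · exact (hcon.mono_right (Finset.le_sup (f := id) hB')).symm
            · exact h𝒟dis B hB' C hC' hBC
        have := h𝒟max _ hins
        rw [Finset.card_insert_of_notMem hA𝒟] at this
        omega
      set F₁ := F.erase ∅ with hF₁
      have hF₁card : (r - 1) * (k + 1) * N + N + 1 ≤ F₁.card := by
        have := Finset.card_erase_of_mem (a := (∅ : Finset ℕ)) (s := F)
        by_cases h : (∅ : Finset ℕ) ∈ F
        · rw [hF₁, Finset.card_erase_of_mem h]; omega
        · rw [hF₁, Finset.erase_eq_of_notMem h]; omega
      have hF₁ne : ∀ A ∈ F₁, A.Nonempty := by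
        intro A hA
        rw [hF₁, Finset.mem_erase] at hA
        exact Finset.nonempty_iff_ne_empty.mpr hA.1
      set φ : Finset ℕ → ℕ := fun A => if h : (A ∩ Y).Nonempty then h.choose else 0 with hφ
      have hφspec : ∀ A ∈ F₁, φ A ∈ A ∧ φ A ∈ Y := by
        intro A hA
        have h := hmeet A (Finset.erase_subset _ _ hA) (hF₁ne A hA)
        rw [hφ]
        simp only [dif_pos h]
        have := h.choose_spec
        rw [Finset.mem_inter] at this
        exact this
      have hpig : Y.card * N < F₁.card := by
        calc Y.card * N ≤ (r - 1) * (k + 1) * N := Nat.mul_le_mul_right _ hYcard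
          _ < F₁.card := by omega
      obtain ⟨y, _hyY, hyfib⟩ := Finset.exists_lt_card_fiber_of_mul_lt_card_of_maps_to
        (fun A hA => (hφspec A hA).2) hpig
      set G := F₁.filter (fun A => φ A = y) with hG
      have hGy : ∀ A ∈ G, y ∈ A := by
        intro A hA
        rw [hG, Finset.mem_filter] at hA
        exact hA.2 ▸ (hφspec A hA.1).1
      set G' := G.image (fun A => A.erase y) with hG'
      have hG'card : N ≤ G'.card := by
        rw [hG', Finset.card_image_of_injOn]
        · omega
        · intro A hA B hB hAB
          simp only at hAB
          rw [← Finset.insert_erase (hGy A (Finset.mem_coe.mp hA)), hAB,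
            Finset.insert_erase (hGy B (Finset.mem_coe.mp hB))]
      have hG'size : ∀ B ∈ G', B.card ≤ k := by
        intro B hB
        rw [hG', Finset.mem_image] at hB
        obtain ⟨A, hA, rfl⟩ := hB
        rw [Finset.card_erase_of_mem (hGy A hA)]
        have : A.card ≤ k + 1 := hsize A (Finset.erase_subset _ _ (Finset.mem_filter.mp hA).1)
        omega
      obtain ⟨F'', hF''sub, hF''card, c, hc, hd⟩ := hN G' hG'card hG'size
      have hyB : ∀ B ∈ F'', y ∉ B := by
        intro B hB
        have := hF''sub hB
        rw [hG', Finset.mem_image] at this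
        obtain ⟨A, _, rfl⟩ := this
        exact Finset.notMem_erase y A
      have hlift : ∀ B ∈ F'', insert y B ∈ F := by
        intro B hB
        have := hF''sub hB
        rw [hG', Finset.mem_image] at this
        obtain ⟨A, hA, rfl⟩ := this
        rw [Finset.insert_erase (hGy A hA)]
        exact Finset.erase_subset _ _ (Finset.mem_filter.mp hA).1
      have hinj : Set.InjOn (insert y) (F'' : Set (Finset ℕ)) := by
        intro B hB B' hB' hBB'
        have h1 : (insert y B).erase y = B := by
          rw [Finset.erase_insert (hyB B (Finset.mem_coe.mp hB))]
        have h2 : (insert y B').erase y = B' := by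
          rw [Finset.erase_insert (hyB B' (Finset.mem_coe.mp hB'))]
        rw [← h1, hBB', h2]
      refine ⟨F''.image (insert y), ?_, ?_, insert y c, ?_, ?_⟩
      · intro A' hA'
        rw [Finset.mem_image] at hA'
        obtain ⟨B, hB, rfl⟩ := hA'
        exact hlift B hB
      · rw [Finset.card_image_of_injOn hinj, hF''card]
      · intro A' hA'
        rw [Finset.mem_image] at hA'
        obtain ⟨B, hB, rfl⟩ := hA'
        exact Finset.insert_subset_insert y (hc B hB)
      · have hpetal : ∀ B ∈ F'', insert y B \ insert y c = B \ c := by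
          intro B hB
          ext z
          simp only [Finset.mem_sdiff, Finset.mem_insert]
          constructor
          · rintro ⟨hz1, hz2⟩
            push_neg at hz2
            rcases hz1 with rfl | hz1
            · exact absurd rfl hz2.1
            · exact ⟨hz1, hz2.2⟩
          · rintro ⟨hz1, hz2⟩
            have hzy : z ≠ y := fun h => hyB B hB (h ▸ hz1)
            exact ⟨Or.inr hz1, by push_neg; exact ⟨hzy, hz2⟩⟩
        intro A' hA' A'' hA'' hne
        rw [Finset.mem_image] at hA' hA''
        obtain ⟨B, hB, rfl⟩ := hA'
        obtain ⟨B', hB', rfl⟩ := hA''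
        rw [hpetal B hB, hpetal B' hB']
        exact hd B hB B' hB' (fun h => hne (h ▸ rfl))

open scoped Classical in
lemma comb_lemma (k r N : ℕ) (hr : 1 ≤ r) (hN : 1 ≤ N)
    (hSun : ∀ F : Finset (Finset ℕ), F.card = N → (∀ A ∈ F, A.card ≤ k) →
      ∃ F' ⊆ F, F'.card = r ∧ IsSunflower F')
    (Pk : Finset (Finset ℕ)) (hPk : ∀ B ∈ Pk, B.card ≤ k)
    (w : Finset ℕ → ℝ≥0∞) (hw : ∑ B ∈ Pk, w B = 1) :
    ((4 * N : ℝ≥0∞) ^ r)⁻¹ ≤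
      ∑ y ∈ (Fintype.piFinset fun _ : Fin r => Pk).filter IsSunflowerTuple, ∏ i, w (y i) := by
  set m := N * r with hm
  have hmpos : 0 < m := by positivity
  set X := Fintype.piFinset (fun _ : Fin m => Pk) with hX
  set Y := Fintype.piFinset (fun _ : Fin r => Pk) with hYdef
  set G := (Finset.univ : Finset (Fin r → Fin m)).filter (fun g => StrictMono g) with hG
  set q := ∑ y ∈ Y.filter IsSunflowerTuple, ∏ i, w (y i) with hq
  -- Step 2 : every x has a strictly monotone selection giving a sunflower tuple
  have key : ∀ x ∈ X, ∃ g ∈ G, IsSunflowerTuple (fun i => x (g i)) := by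
    intro x hx
    rw [hX, Fintype.mem_piFinset] at hx
    set V := Finset.image x Finset.univ with hV
    have hVPk : ∀ B ∈ V, B ∈ Pk := by
      intro B hB
      rw [hV, Finset.mem_image] at hB
      obtain ⟨j, _, rfl⟩ := hB
      exact hx j
    by_cases hcase : N ≤ V.card
    · obtain ⟨V', hV'sub, hV'card⟩ := Finset.exists_subset_card_eq hcase
      obtain ⟨F', hF'sub, hF'card, c, hc, hd⟩ :=
        hSun V' hV'card (fun A hA => hPk A (hVPk A (hV'sub hA)))
      set ψ : Finset ℕ → Fin m := fun B =>
        if h : ∃ j, x j = B then h.choose else ⟨0, hmpos⟩ with hψdef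
      have hψ : ∀ B ∈ F', x (ψ B) = B := by
        intro B hB
        have hBV : B ∈ V := hV'sub (hF'sub hB)
        rw [hV, Finset.mem_image] at hBV
        obtain ⟨j, _, hj⟩ := hBV
        have hex : ∃ j, x j = B := ⟨j, hj⟩
        rw [hψdef]
        simp only [dif_pos hex]
        exact hex.choose_spec
      set J := F'.image ψ with hJ
      have hJcard : J.card = r := by
        rw [hJ, Finset.card_image_of_injOn, hF'card]
        intro B hB B' hB' hBB'
        rw [← hψ B (Finset.mem_coe.mp hB), hBB', hψ B' (Finset.mem_coe.mp hB')]
      set g := J.orderEmbOfFin hJcard with hg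
      have hgmem : ∀ i, g i ∈ J := fun i => Finset.orderEmbOfFin_mem J hJcard i
      have hgval : ∀ i, x (g i) ∈ F' := by
        intro i
        have := hgmem i
        rw [hJ, Finset.mem_image] at this
        obtain ⟨B, hB, hBg⟩ := this
        rw [← hBg, hψ B hB]
        exact hB
      refine ⟨g, ?_, c, fun i => hc _ (hgval i), fun i j hne => hd _ (hgval i) _ (hgval j) hne⟩
      rw [hG, Finset.mem_filter]
      exact ⟨Finset.mem_univ _, (J.orderEmbOfFin hJcard).strictMono⟩
    · push_neg at hcase
      have hmaps : ∀ j ∈ (Finset.univ : Finset (Fin m)), x j ∈ V := by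
        intro j _
        rw [hV, Finset.mem_image]
        exact ⟨j, Finset.mem_univ _, rfl⟩
      have hlt : V.card * (r - 1) < (Finset.univ : Finset (Fin m)).card := by
        rw [Finset.card_univ, Fintype.card_fin]
        calc V.card * (r - 1) ≤ (N - 1) * (r - 1) := Nat.mul_le_mul_right _ (by omega)
          _ < N * r := by
              have : (N - 1) * (r - 1) + 1 ≤ N * r := by
                cases' N with N; · omega
                cases' r with r; · omega
                simp [Nat.succ_sub_one, Nat.mul_succ, Nat.succ_mul]
                nlinarith
              omega
      obtain ⟨B, _hBV, hBfib⟩ :=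
        Finset.exists_lt_card_fiber_of_mul_lt_card_of_maps_to hmaps hlt
      have hrle : r ≤ (Finset.univ.filter (fun j => x j = B)).card := by omega
      obtain ⟨J, hJsub, hJcard⟩ := Finset.exists_subset_card_eq hrle
      set g := J.orderEmbOfFin hJcard with hg
      have hgval : ∀ i, x (g i) = B := by
        intro i
        have := hJsub (Finset.orderEmbOfFin_mem J hJcard i)
        rw [Finset.mem_filter] at this
        exact this.2
      refine ⟨g, ?_, B, fun i => by show B ⊆ x (g i); rw [hgval i],
        fun i j hne => absurd ((hgval i).trans (hgval j).symm) hne⟩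
      rw [hG, Finset.mem_filter]
      exact ⟨Finset.mem_univ _, (J.orderEmbOfFin hJcard).strictMono⟩
  -- Step 1 : total mass of X is 1
  have step1 : (1 : ℝ≥0∞) = ∑ x ∈ X, ∏ j, w (x j) := by
    have h := Finset.prod_univ_sum (fun _ : Fin m => Pk) (fun _ B => w B)
    rw [← h, Finset.prod_const] ; rw [hw, one_pow]
  -- Step 4 : marginalization
  have step4 : ∀ g ∈ G, (∑ x ∈ X.filter (fun x => IsSunflowerTuple (fun i => x (g i))),
      ∏ j, w (x j)) = q := by
    intro g hgG
    have hginj : Function.Injective g := by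
      rw [hG, Finset.mem_filter] at hgG
      exact hgG.2.injective
    have hmapsto : ∀ x ∈ X.filter (fun x => IsSunflowerTuple (fun i => x (g i))),
        (fun i => x (g i)) ∈ Y.filter IsSunflowerTuple := by
      intro x hx
      rw [Finset.mem_filter] at hx ⊢
      refine ⟨?_, hx.2⟩
      rw [hYdef, Fintype.mem_piFinset]
      intro i
      exact (Fintype.mem_piFinset.mp (hX ▸ hx.1)) (g i)
    have hfib := Finset.sum_fiberwise_of_maps_to hmapsto (fun x => ∏ j, w (x j))
    rw [← hfib, hq]
    apply Finset.sum_congr rfl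
    intro y hy
    rw [Finset.mem_filter] at hy
    obtain ⟨hyY, hysun⟩ := hy
    have hyPk : ∀ i, y i ∈ Pk := Fintype.mem_piFinset.mp (hYdef ▸ hyY)
    -- simplify double filter
    have hfilter : (X.filter (fun x => IsSunflowerTuple (fun i => x (g i)))).filter
        (fun x => (fun i => x (g i)) = y) = X.filter (fun x => (fun i => x (g i)) = y) := by
      rw [Finset.filter_filter]
      apply Finset.filter_congr
      intro x _
      constructor
      · rintro ⟨_, h2⟩; exact h2
      · intro h; exact ⟨h ▸ hysun, h⟩
    rw [hfilter]
    -- the fiber is a product set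
    set t : Fin m → Finset (Finset ℕ) := fun j =>
      if h : ∃ i, g i = j then ({y h.choose} : Finset (Finset ℕ)) else Pk with ht
    have hXt : X.filter (fun x => (fun i => x (g i)) = y) = Fintype.piFinset t := by
      ext x
      simp only [Finset.mem_filter, hX, Fintype.mem_piFinset]
      constructor
      · rintro ⟨hx1, hx2⟩ j
        rw [ht]
        by_cases h : ∃ i, g i = j
        · simp only [dif_pos h, Finset.mem_singleton]
          have hc := congrFun hx2 h.choose
          rw [h.choose_spec] at hc
          exact hc
        · simp only [dif_neg h]
          exact hx1 j
      · intro hx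
        constructor
        · intro j
          have := hx j
          rw [ht] at this
          simp only at this
          by_cases h : ∃ i, g i = j
          · rw [dif_pos h, Finset.mem_singleton] at this
            rw [this]; exact hyPk _
          · rwa [dif_neg h] at this
        · funext i
          have := hx (g i)
          rw [ht] at this
          simp only at this
          have hex : ∃ i', g i' = g i := ⟨i, rfl⟩
          rw [dif_pos hex, Finset.mem_singleton] at this
          rw [this, hginj hex.choose_spec]
    rw [hXt, ← Finset.prod_univ_sum]
    have houter : ∀ j ∈ (Finset.univ : Finset (Fin m)),
        j ∉ Finset.image g Finset.univ → (∑ B ∈ t j, w B) = 1 := by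
      intro j _ hj
      have h : ¬ ∃ i, g i = j := by
        intro ⟨i, hi⟩
        exact hj (Finset.mem_image.mpr ⟨i, Finset.mem_univ _, hi⟩)
      rw [ht]
      simp only [dif_neg h]
      exact hw
    rw [← Finset.prod_subset (Finset.subset_univ (Finset.image g Finset.univ)) houter]
    rw [Finset.prod_image (fun i _ i' _ h => hginj h)]
    apply Finset.prod_congr rfl
    intro i _
    have hex : ∃ i', g i' = g i := ⟨i, rfl⟩
    rw [ht]
    simp only [dif_pos hex]
    rw [Finset.sum_singleton, hginj hex.choose_spec]
  -- Step 3 : union bound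
  have step3 : (1 : ℝ≥0∞) ≤ ∑ g ∈ G, q := by
    rw [step1]
    calc ∑ x ∈ X, ∏ j, w (x j)
        ≤ ∑ x ∈ X, ∑ g ∈ G, (if IsSunflowerTuple (fun i => x (g i)) then ∏ j, w (x j) else 0) := by
          apply Finset.sum_le_sum
          intro x hx
          obtain ⟨g, hgG, hgsun⟩ := key x hx
          calc ∏ j, w (x j) = (if IsSunflowerTuple (fun i => x (g i)) then ∏ j, w (x j) else 0) := by
                rw [if_pos hgsun]
            _ ≤ ∑ g ∈ G, (if IsSunflowerTuple (fun i => x (g i)) then ∏ j, w (x j) else 0) :=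
                Finset.single_le_sum
                  (f := fun g' => if IsSunflowerTuple (fun i => x (g' i)) then ∏ j, w (x j) else 0)
                  (fun _ _ => zero_le) hgG
      _ = ∑ g ∈ G, ∑ x ∈ X, (if IsSunflowerTuple (fun i => x (g i)) then ∏ j, w (x j) else 0) :=
          Finset.sum_comm
      _ = ∑ g ∈ G, ∑ x ∈ X.filter (fun x => IsSunflowerTuple (fun i => x (g i))), ∏ j, w (x j) := by
          apply Finset.sum_congr rfl
          intro g _
          rw [Finset.sum_filter]
      _ = ∑ g ∈ G, q := Finset.sum_congr rfl step4
  -- Step 5 : count G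
  have hGcard : G.card ≤ (4 * N) ^ r := by
    have h1 : G.card ≤ ((Finset.univ : Finset (Fin m)).powersetCard r).card := by
      apply Finset.card_le_card_of_injOn (fun g => Finset.image g Finset.univ)
      · intro g hg
        rw [hG, Finset.mem_coe, Finset.mem_filter] at hg
        rw [Finset.mem_coe, Finset.mem_powersetCard]
        exact ⟨Finset.subset_univ _,
          by rw [Finset.card_image_of_injective _ hg.2.injective, Finset.card_univ, Fintype.card_fin]⟩
      · intro g₁ hg₁ g₂ hg₂ himg
        simp only at himg
        rw [Finset.mem_coe, hG, Finset.mem_filter] at hg₁ hg₂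
        have hc₁ : (Finset.image g₁ Finset.univ).card = r := by
          rw [Finset.card_image_of_injective _ hg₁.2.injective, Finset.card_univ, Fintype.card_fin]
        have e₁ : g₁ = ⇑((Finset.image g₁ Finset.univ).orderEmbOfFin hc₁) :=
          Finset.orderEmbOfFin_unique hc₁
            (fun i => Finset.mem_image.mpr ⟨i, Finset.mem_univ _, rfl⟩) hg₁.2
        have hc₂ : (Finset.image g₁ Finset.univ).card = r := hc₁
        have e₂ : g₂ = ⇑((Finset.image g₁ Finset.univ).orderEmbOfFin hc₁) := by
          apply Finset.orderEmbOfFin_unique hc₁ _ hg₂.2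
          intro i
          rw [himg]
          exact Finset.mem_image.mpr ⟨i, Finset.mem_univ _, rfl⟩
        rw [e₁, e₂]
      
    have h2 : ((Finset.univ : Finset (Fin m)).powersetCard r).card = m.choose r := by
      rw [Finset.card_powersetCard, Finset.card_univ, Fintype.card_fin]
    rw [h2] at h1
    exact h1.trans (choose_bound N r hr)
  have hGsum : ∑ g ∈ G, q = (G.card : ℝ≥0∞) * q := by
    rw [Finset.sum_const, nsmul_eq_mul]
  have hfinal : (1 : ℝ≥0∞) ≤ (4 * N : ℝ≥0∞) ^ r * q := by
    calc (1 : ℝ≥0∞) ≤ ∑ g ∈ G, q := step3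
      _ = (G.card : ℝ≥0∞) * q := hGsum
      _ ≤ (4 * N : ℝ≥0∞) ^ r * q := by
          apply mul_le_mul_left
          calc (G.card : ℝ≥0∞) ≤ (((4 * N) ^ r : ℕ) : ℝ≥0∞) := Nat.cast_le.mpr hGcard
            _ = (4 * N : ℝ≥0∞) ^ r := by push_cast; ring
  have hne0 : (4 * N : ℝ≥0∞) ^ r ≠ 0 := by
    apply pow_ne_zero
    intro h
    rw [mul_eq_zero] at h
    rcases h with h | h
    · norm_num at h
    · rw [Nat.cast_eq_zero] at h; omega
  have hnetop : (4 * N : ℝ≥0∞) ^ r ≠ ⊤ := by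
    apply ENNReal.pow_ne_top
    exact ENNReal.mul_ne_top (by norm_num) (ENNReal.natCast_ne_top N)
  calc ((4 * N : ℝ≥0∞) ^ r)⁻¹ = ((4 * N : ℝ≥0∞) ^ r)⁻¹ * 1 := (mul_one _).symm
    _ ≤ ((4 * N : ℝ≥0∞) ^ r)⁻¹ * ((4 * N : ℝ≥0∞) ^ r * q) := mul_le_mul_right hfinal _
    _ = (((4 * N : ℝ≥0∞) ^ r)⁻¹ * (4 * N : ℝ≥0∞) ^ r) * q := (mul_assoc _ _ _).symm
    _ = 1 * q := by rw [ENNReal.inv_mul_cancel hne0 hnetop]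
    _ = q := one_mul q

end Auxiliary

/-- Probabilistic Erdős–Rado theorem: if `𝐀₁, …, 𝐀ᵣ` are independent copies of a random
`k`-element subset of a finite set `S`, then they form a sunflower with probability at
least `(4 Sun(k,r))^{-r}`. -/
theorem probabilistic_erdos_rado (k r : ℕ) (hk : 1 ≤ k) (hr : 1 ≤ r)
    {Ω : Type*} [MeasureSpace Ω] [IsProbabilityMeasure (ℙ : Measure Ω)]
    (S : Finset ℕ) (A : Fin r → Ω → Finset ℕ)
    (hmeas : ∀ i, Measurable (A i))
    (hval : ∀ i ω, A i ω ⊆ S ∧ (A i ω).card = k)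
    (hindep : iIndepFun A ℙ)
    (hident : ∀ i, Measure.map (A i) ℙ = Measure.map (A ⟨0, hr⟩) ℙ) :
    ((4 * Sun k r : ℝ≥0∞) ^ r)⁻¹ ≤ ℙ {ω | IsSunflowerTuple fun i => A i ω} := by
  classical
  -- Sun is well-defined and positive
  set SunSet : Set ℕ := {N | ∀ F : Finset (Finset ℕ), F.card = N → (∀ A ∈ F, A.card ≤ k) →
    ∃ F' ⊆ F, F'.card = r ∧ IsSunflower F'} with hSunSet
  have hSne : SunSet.Nonempty := by
    obtain ⟨N, hN⟩ := sunflower_exists r hr k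
    exact ⟨N, fun F hF hs => hN F (le_of_eq hF.symm) hs⟩
  have hmem : Sun k r ∈ SunSet := Nat.sInf_mem hSne
  have hSunpos : 1 ≤ Sun k r := by
    by_contra hcon
    have h0 : Sun k r = 0 := by omega
    obtain ⟨F', hsub, hcard, _⟩ := hmem (∅ : Finset (Finset ℕ)) (by rw [h0]; rfl)
      (fun A hA => absurd hA (Finset.notMem_empty A))
    rw [Finset.subset_empty] at hsub
    rw [hsub, Finset.card_empty] at hcard
    omega
  set N := Sun k r with hNdef
  -- setup
  set Pk : Finset (Finset ℕ) := S.powerset.filter (fun B => B.card = k) with hPkdef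
  have hPkval : ∀ i ω, A i ω ∈ Pk := by
    intro i ω
    rw [hPkdef, Finset.mem_filter, Finset.mem_powerset]
    exact ⟨(hval i ω).1, (hval i ω).2⟩
  have hmsing : ∀ s : Set (Finset ℕ), MeasurableSet s := fun s =>
    MeasurableSpace.measurableSet_top
  set A0 := A ⟨0, hr⟩ with hA0
  set w : Finset ℕ → ℝ≥0∞ := fun B => ℙ (A0 ⁻¹' {B}) with hwdef
  have hw : ∑ B ∈ Pk, w B = 1 := by
    have hdisj : (↑Pk : Set (Finset ℕ)).PairwiseDisjoint (fun B => A0 ⁻¹' {B}) := by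
      intro B _ B' _ hne
      rw [Function.onFun, Set.disjoint_left]
      intro ω h1 h2
      rw [Set.mem_preimage, Set.mem_singleton_iff] at h1 h2
      exact hne (h1 ▸ h2 ▸ rfl)
    have hunion : (⋃ B ∈ Pk, A0 ⁻¹' {B}) = Set.univ := by
      apply Set.eq_univ_of_forall
      intro ω
      exact Set.mem_biUnion (hPkval _ ω) rfl
    calc ∑ B ∈ Pk, w B = ℙ (⋃ B ∈ Pk, A0 ⁻¹' {B}) :=
          (measure_biUnion_finset hdisj (fun B _ => hmeas _ (hmsing _))).symm
      _ = 1 := by rw [hunion, measure_univ]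
  -- probability of each elementary cylinder
  have hEval : ∀ y : Fin r → Finset ℕ, ℙ (⋂ i, A i ⁻¹' {y i}) = ∏ i, w (y i) := by
    intro y
    have h := (ProbabilityTheory.iIndepFun_iff_measure_inter_preimage_eq_mul.mp hindep)
      Finset.univ (sets := fun i => {y i}) (fun i _ => hmsing _)
    have hbi : (⋂ i ∈ Finset.univ, A i ⁻¹' {y i}) = ⋂ i, A i ⁻¹' {y i} := by
      ext ω; simp
    rw [hbi] at h
    rw [h]
    apply Finset.prod_congr rfl
    intro i _
    rw [hwdef]
    show ℙ (A i ⁻¹' {y i}) = ℙ (A0 ⁻¹' {y i})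
    rw [← Measure.map_apply (hmeas i) (hmsing _), hA0, hident i,
      Measure.map_apply (hmeas ⟨0, hr⟩) (hmsing _)]
  -- lower bound the sunflower event by the union of cylinders
  have hPkcard : ∀ B ∈ Pk, B.card ≤ k := by
    intro B hB
    rw [hPkdef, Finset.mem_filter] at hB
    exact le_of_eq hB.2
  have hcomb := comb_lemma k r N hr hSunpos hmem Pk hPkcard w hw
  refine le_trans hcomb ?_
  set Tsun := (Fintype.piFinset fun _ : Fin r => Pk).filter IsSunflowerTuple with hTsun
  set E : (Fin r → Finset ℕ) → Set Ω := fun y => ⋂ i, A i ⁻¹' {y i} with hE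
  have hEdisj : (↑Tsun : Set (Fin r → Finset ℕ)).PairwiseDisjoint E := by
    intro y _ y' _ hne
    rw [Function.onFun, Set.disjoint_left]
    intro ω h1 h2
    apply hne
    funext i
    have e1 := Set.mem_iInter.mp h1 i
    have e2 := Set.mem_iInter.mp h2 i
    rw [Set.mem_preimage, Set.mem_singleton_iff] at e1 e2
    rw [← e1, ← e2]
  have hEmeas : ∀ y, MeasurableSet (E y) := fun y =>
    MeasurableSet.iInter (fun i => hmeas i (hmsing _))
  have hEsub : (⋃ y ∈ Tsun, E y) ⊆ {ω | IsSunflowerTuple fun i => A i ω} := by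
    intro ω hω
    obtain ⟨y, hy, hωy⟩ := Set.mem_iUnion₂.mp hω
    rw [hTsun, Finset.mem_filter] at hy
    have heq : (fun i => A i ω) = y := by
      funext i
      have := Set.mem_iInter.mp hωy i
      rwa [Set.mem_preimage, Set.mem_singleton_iff] at this
    show IsSunflowerTuple fun i => A i ω
    rw [heq]
    exact hy.2
  calc ∑ y ∈ Tsun, ∏ i, w (y i) = ∑ y ∈ Tsun, ℙ (E y) :=
        Finset.sum_congr rfl (fun y _ => (hEval y).symm)
    _ = ℙ (⋃ y ∈ Tsun, E y) := (measure_biUnion_finset hEdisj (fun y _ => hEmeas y)).symm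
    _ ≤ ℙ {ω | IsSunflowerTuple fun i => A i ω} := measure_mono hEsub
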